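/- Let f : ℝᵖ → ℝ be a continuous strictly convex function, and for each t ≥ 0 let β̂(t) denote the unique minimizer of f over the closed ℓ¹-ball {β ∈ ℝᵖ : ‖β‖₁ ≤ t} (which exists and is unique by compactness and strict convexity). Then the Lasso solution path t ↦ β̂(t) is continuous on [0, ∞). -/
import Mathlib

open Finset Filter Topology

section LassoAux

variable {p : ℕ}

/-- The ℓ¹ "norm". -/
noncomputable def lassoG (β : Fin p → ℝ) : ℝ := ∑ j, |β j|

lemma lassoG_cont : Continuous (lassoG (p := p)) :=
  continuous_finset_sum _ fun j _ => (continuous_apply j).abs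

lemma lassoG_nonneg (β : Fin p → ℝ) : 0 ≤ lassoG β :=
  Finset.sum_nonneg fun _ _ => abs_nonneg _

lemma lassoG_smul (c : ℝ) (β : Fin p → ℝ) : lassoG (c • β) = |c| * lassoG β := by
  simp [lassoG, abs_mul, Finset.mul_sum]

lemma lassoG_add_le (β γ : Fin p → ℝ) : lassoG (β + γ) ≤ lassoG β + lassoG γ := by
  rw [lassoG, lassoG, lassoG, ← Finset.sum_add_distrib]
  exact Finset.sum_le_sum fun j _ => abs_add_le _ _

lemma eq_zero_of_lassoG_le_zero {β : Fin p → ℝ} (h : lassoG β ≤ 0) : β = 0 := by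
  funext j
  have h1 : |β j| ≤ lassoG β :=
    Finset.single_le_sum (f := fun j => |β j|) (fun i _ => abs_nonneg _) (Finset.mem_univ j)
  have : |β j| ≤ 0 := h1.trans h
  simpa [abs_nonpos_iff] using this

lemma isCompact_lassoBall (C : ℝ) (hC : 0 ≤ C) :
    IsCompact {β : Fin p → ℝ | lassoG β ≤ C} := by
  refine IsCompact.of_isClosed_subset (isCompact_closedBall (0 : Fin p → ℝ) C)
    (isClosed_le lassoG_cont continuous_const) ?_
  intro β hβ
  rw [Metric.mem_closedBall, dist_zero_right]
  rw [pi_norm_le_iff_of_nonneg hC]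
  intro j
  have h1 : |β j| ≤ lassoG β :=
    Finset.single_le_sum (f := fun j => |β j|) (fun i _ => abs_nonneg _) (Finset.mem_univ j)
  exact (Real.norm_eq_abs _ ▸ h1).trans hβ

lemma lasso_min_unique {f : (Fin p → ℝ) → ℝ} (hf : StrictConvexOn ℝ Set.univ f)
    {t : ℝ} {x y : Fin p → ℝ} (hx : lassoG x ≤ t) (hy : lassoG y ≤ t)
    (hxm : ∀ β, lassoG β ≤ t → f x ≤ f β) (hym : ∀ β, lassoG β ≤ t → f y ≤ f β) :
    x = y := by
  by_contra hne
  have hmid : lassoG ((1/2 : ℝ) • x + (1/2 : ℝ) • y) ≤ t := by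
    calc lassoG ((1/2 : ℝ) • x + (1/2 : ℝ) • y)
        ≤ lassoG ((1/2 : ℝ) • x) + lassoG ((1/2 : ℝ) • y) := lassoG_add_le _ _
      _ = (1/2) * lassoG x + (1/2) * lassoG y := by
          rw [lassoG_smul, lassoG_smul, abs_of_nonneg (by norm_num : (0:ℝ) ≤ 1/2)]
      _ ≤ t := by linarith
  have h1 := hf.2 (Set.mem_univ x) (Set.mem_univ y) hne
    (by norm_num : (0:ℝ) < 1/2) (by norm_num : (0:ℝ) < 1/2) (by norm_num)
  have hxy : f x = f y := le_antisymm (hxm y hy) (hym x hx)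
  have h2 := hxm _ hmid
  rw [smul_eq_mul, smul_eq_mul] at h1
  linarith

end LassoAux

open Finset in
/-- Continuity of the Lasso solution path: if `f` is continuous and strictly
convex and `β̂ t` is the (unique) minimizer of `f` over the ℓ¹-ball of radius
`t` for each `t ≥ 0`, then `t ↦ β̂ t` is continuous on `[0, ∞)`. -/
theorem lasso_path_continuous
    {p : ℕ} (f : (Fin p → ℝ) → ℝ)
    (hf_cont : Continuous f)
    (hf_sconv : StrictConvexOn ℝ Set.univ f)
    (βhat : ℝ → (Fin p → ℝ))
    (hβhat : ∀ t : ℝ, 0 ≤ t →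
      (∑ j, |βhat t j|) ≤ t ∧
        ∀ β : Fin p → ℝ, (∑ j, |β j|) ≤ t → f (βhat t) ≤ f β) :
    ContinuousOn βhat (Set.Ici 0) := by
  have hβhat' : ∀ t : ℝ, 0 ≤ t →
      lassoG (βhat t) ≤ t ∧ ∀ β : Fin p → ℝ, lassoG β ≤ t → f (βhat t) ≤ f β :=
    hβhat
  intro t₀ ht₀
  rw [Set.mem_Ici] at ht₀
  have hmin₀ := hβhat' t₀ ht₀
  rw [ContinuousWithinAt]
  apply tendsto_of_subseq_tendsto
  intro ns hns
  rw [tendsto_nhdsWithin_iff] at hns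
  obtain ⟨hns1, hns2⟩ := hns
  -- find a tail where everything is in [0, t₀ + 1]
  have hbound : ∀ᶠ n in atTop, ns n ≤ t₀ + 1 :=
    hns1.eventually (eventually_le_nhds (by linarith))
  obtain ⟨N, hN⟩ := (hbound.and hns2).exists_forall_of_atTop
  set v : ℕ → ℝ := fun n => ns (n + N) with hv
  have hv0 : ∀ n, 0 ≤ v n := fun n => (hN (n + N) (Nat.le_add_left _ _)).2
  have hv1 : ∀ n, v n ≤ t₀ + 1 := fun n => (hN (n + N) (Nat.le_add_left _ _)).1
  have hvlim : Tendsto v atTop (𝓝 t₀) :=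
    hns1.comp (tendsto_add_atTop_nat N)
  -- the minimizers live in a compact set
  have hK : IsCompact {β : Fin p → ℝ | lassoG β ≤ t₀ + 1} :=
    isCompact_lassoBall _ (by linarith)
  have hmem : ∀ n, βhat (v n) ∈ {β : Fin p → ℝ | lassoG β ≤ t₀ + 1} := fun n =>
    ((hβhat' (v n) (hv0 n)).1).trans (hv1 n)
  obtain ⟨a, _, φ, hφ, hφlim⟩ := hK.tendsto_subseq hmem
  set w : ℕ → ℝ := fun i => v (φ i) with hw
  have hwlim : Tendsto w atTop (𝓝 t₀) := hvlim.comp hφ.tendsto_atTop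
  have hlim : Tendsto (fun i => βhat (w i)) atTop (𝓝 a) := hφlim
  -- the limit point is feasible
  have ha1 : lassoG a ≤ t₀ := by
    refine le_of_tendsto_of_tendsto' ((lassoG_cont.tendsto a).comp hlim) hwlim fun i => ?_
    exact (hβhat' (w i) (hv0 (φ i))).1
  -- the limit point is a minimizer
  have ha2 : ∀ β, lassoG β ≤ t₀ → f a ≤ f β := by
    intro β hβ
    rcases eq_or_lt_of_le ht₀ with h0 | h0
    · -- t₀ = 0 : β = 0 = a
      have hβ0 : β = 0 := eq_zero_of_lassoG_le_zero (by rw [← h0] at hβ; exact hβ)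
      have ha0 : a = 0 := eq_zero_of_lassoG_le_zero (by rw [← h0] at ha1; exact ha1)
      rw [hβ0, ha0]
    · -- t₀ > 0 : scale β into the smaller balls
      have h1 : Tendsto (fun i => f (βhat (w i))) atTop (𝓝 (f a)) :=
        (hf_cont.tendsto a).comp hlim
      have h2 : Tendsto (fun i => f ((w i / t₀) • β)) atTop (𝓝 (f β)) := by
        have h3 : Tendsto (fun i => (w i / t₀) • β) atTop (𝓝 ((t₀ / t₀) • β)) :=
          (hwlim.div_const t₀).smul_const β
        rw [div_self h0.ne', one_smul] at h3
        exact (hf_cont.tendsto β).comp h3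
      refine le_of_tendsto_of_tendsto' h1 h2 fun i => ?_
      refine (hβhat' (w i) (hv0 (φ i))).2 _ ?_
      rw [lassoG_smul, abs_of_nonneg (div_nonneg (hv0 (φ i)) h0.le)]
      calc w i / t₀ * lassoG β ≤ w i / t₀ * t₀ :=
            mul_le_mul_of_nonneg_left hβ (div_nonneg (hv0 (φ i)) h0.le)
        _ = w i := div_mul_cancel₀ _ h0.ne'
  -- by uniqueness of the minimizer, a = βhat t₀
  have haeq : a = βhat t₀ :=
    lasso_min_unique hf_sconv ha1 hmin₀.1 ha2 hmin₀.2
  exact ⟨fun n => φ n + N, by rw [← haeq]; exact hlim⟩
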